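/- arXiv:1911.01868 — 3 statements merged into one kernel-verified Lean document; each statement's English description precedes it below -/
import Mathlib

section
/- For positive semidefinite matrices U and W with W positive definite, tr(U W^{-1}) ≥ 0, and if D_KL := tr(U W^{-1}) − (1/2) log det(I + U W^{-1}), then (1/2) tr(U W^{-1}) ≤ D_KL ≤ tr(U W^{-1}) − (1/2) log(1 + tr(U W^{-1})). -/
open Matrix Finset

-- 1 + sum ≤ prod (1 + f i) for nonneg f
lemma aux_one_add_sum_le_prod {α : Type*} (s : Finset α) (f : α → ℝ)
    (hf : ∀ i ∈ s, 0 ≤ f i) :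
    1 + ∑ i ∈ s, f i ≤ ∏ i ∈ s, (1 + f i) := by
  classical
  induction s using Finset.induction_on with
  | empty => simp
  | @insert a s ha ih =>
    rw [Finset.sum_insert ha, Finset.prod_insert ha]
    have h1 : 0 ≤ f a := hf a (mem_insert_self a s)
    have h2 : ∀ i ∈ s, 0 ≤ f i := fun i hi => hf i (mem_insert_of_mem hi)
    have h3 := ih h2
    have h4 : 0 ≤ ∑ i ∈ s, f i := Finset.sum_nonneg h2
    nlinarith

lemma aux_psd_key {m : ℕ} (N : Matrix (Fin m) (Fin m) ℝ) (hN : N.PosSemidef) :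
    0 ≤ N.trace ∧ Real.log (1 + N).det ≤ N.trace ∧
      Real.log (1 + N.trace) ≤ Real.log (1 + N).det := by
  classical
  have hH := hN.1
  set μ := hH.eigenvalues with hμdef
  have hμ : ∀ i, 0 ≤ μ i := hN.eigenvalues_nonneg
  have hUU : (hH.eigenvectorUnitary : Matrix (Fin m) (Fin m) ℝ) *
      (star (hH.eigenvectorUnitary : Matrix (Fin m) (Fin m) ℝ)) = 1 :=
    Matrix.mem_unitaryGroup_iff.mp hH.eigenvectorUnitary.2
  have hUU' : (star (hH.eigenvectorUnitary : Matrix (Fin m) (Fin m) ℝ)) *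
      (hH.eigenvectorUnitary : Matrix (Fin m) (Fin m) ℝ) = 1 :=
    Matrix.mem_unitaryGroup_iff'.mp hH.eigenvectorUnitary.2
  have htr : N.trace = ∑ i, μ i := by
    conv_lhs => rw [hH.spectral_theorem, Unitary.conjStarAlgAut_apply]
    rw [Matrix.trace_mul_cycle, hUU', Matrix.one_mul]
    simp [Matrix.trace_diagonal, hμdef]
  have hdet : (1 + N).det = ∏ i, (1 + μ i) := by
    have h1 : (1 : Matrix (Fin m) (Fin m) ℝ) + N =
        (hH.eigenvectorUnitary : Matrix (Fin m) (Fin m) ℝ) *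
          (1 + diagonal (RCLike.ofReal ∘ μ)) *
          (star (hH.eigenvectorUnitary : Matrix (Fin m) (Fin m) ℝ)) := by
      rw [Matrix.mul_add, Matrix.add_mul, Matrix.mul_one, hUU]
      conv_lhs => rw [hH.spectral_theorem, Unitary.conjStarAlgAut_apply]
    rw [h1, Matrix.det_mul_right_comm]
    have : (hH.eigenvectorUnitary : Matrix (Fin m) (Fin m) ℝ) *
        (star (hH.eigenvectorUnitary : Matrix (Fin m) (Fin m) ℝ)) = 1 := hUU
    rw [Matrix.det_mul, Matrix.det_mul, ← Matrix.det_mul, this]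
    rw [Matrix.det_one, one_mul, ← Matrix.diagonal_one, Matrix.diagonal_add,
      Matrix.det_diagonal]
    simp
  have htrnn : 0 ≤ N.trace := htr ▸ Finset.sum_nonneg fun i _ => hμ i
  refine ⟨htrnn, ?_, ?_⟩
  · rw [hdet, Real.log_prod (fun i _ => by have := hμ i; positivity), htr]
    apply Finset.sum_le_sum
    intro i _
    have := Real.log_le_sub_one_of_pos (show (0:ℝ) < 1 + μ i by linarith [hμ i])
    linarith
  · rw [hdet, htr]
    apply Real.log_le_log (by have := htrnn; rw [htr] at this; linarith)
    exact aux_one_add_sum_le_prod _ _ fun i _ => hμ i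

/-- For `U ⪰ 0` and `W ≻ 0`: `tr (U W⁻¹) ≥ 0`, and the expected KL divergence
`D = tr (U W⁻¹) − (1/2) log det (I + U W⁻¹)` satisfies
`(1/2) tr (U W⁻¹) ≤ D ≤ tr (U W⁻¹) − (1/2) log (1 + tr (U W⁻¹))`. -/
theorem kl_divergence_trace_bounds
    {m : ℕ} (U W : Matrix (Fin m) (Fin m) ℝ)
    (hU : U.PosSemidef) (hW : W.PosDef)
    (D : ℝ) (hD : D = (U * W⁻¹).trace - (1 / 2) * Real.log ((1 + U * W⁻¹).det)) :
    0 ≤ (U * W⁻¹).trace ∧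
    (1 / 2) * (U * W⁻¹).trace ≤ D ∧
    D ≤ (U * W⁻¹).trace - (1 / 2) * Real.log (1 + (U * W⁻¹).trace) := by
  have hWi : (W⁻¹).PosDef := hW.inv
  obtain ⟨R, hRR, hRH⟩ : ∃ R : Matrix (Fin m) (Fin m) ℝ, R * R = W⁻¹ ∧ Rᴴ = R := by
    open scoped MatrixOrder in
    exact ⟨CFC.sqrt W⁻¹, CFC.sqrt_mul_sqrt_self _ hWi.posSemidef.nonneg,
      (CFC.sqrt_nonneg _).isSelfAdjoint⟩
  have hN : (R * U * R).PosSemidef := by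
    have := hU.conjTranspose_mul_mul_same R
    rwa [hRH] at this
  have htr : (U * W⁻¹).trace = (R * U * R).trace := by
    rw [← hRR, ← Matrix.mul_assoc, Matrix.trace_mul_comm (U * R) R, ← Matrix.mul_assoc]
  have hdet : (1 + U * W⁻¹).det = (1 + R * U * R).det := by
    rw [← hRR, ← Matrix.mul_assoc, Matrix.det_one_add_mul_comm (U * R) R, ← Matrix.mul_assoc]
  obtain ⟨h0, h1, h2⟩ := aux_psd_key _ hN
  rw [← htr] at h0 h1 h2
  rw [← hdet] at h1 h2
  exact ⟨h0, by rw [hD]; linarith, by rw [hD]; linarith⟩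
end

section
/- Let |ρ| < 1 and define s_k recursively by s_k = ρ s_{k-1} + x_k with s_{-1} = 0. If for every ε > 0, x_k / k^{α+ε} → 0 almost surely, then for every ε > 0, s_k / k^{α+ε} → 0 almost surely. -/
open MeasureTheory Filter

lemma aux_contract (r : ℝ) (hr0 : 0 ≤ r) (hr1 : r < 1) (a b : ℕ → ℝ)
    (ha : ∀ n, 0 ≤ a n) (hb : Tendsto b atTop (nhds 0)) (N : ℕ)
    (hrec : ∀ n, N ≤ n → a (n + 1) ≤ r * a n + b (n + 1)) :
    Tendsto a atTop (nhds 0) := by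
  rw [Metric.tendsto_atTop]
  intro δ hδ
  have hη : 0 < (1 - r) * δ / 4 := by
    have : 0 < 1 - r := by linarith
    positivity
  obtain ⟨M0, hM0⟩ := Metric.tendsto_atTop.mp hb ((1 - r) * δ / 4) hη
  set M := max N M0 with hM
  have hbM : ∀ n, M ≤ n → |b n| ≤ (1 - r) * δ / 4 := by
    intro n hn
    have := hM0 n (le_trans (le_max_right _ _) hn)
    simpa [Real.dist_eq] using this.le
  have key : ∀ m, a (M + m) ≤ r ^ m * a M + δ / 4 := by
    intro m
    induction m with
    | zero => simp; linarith
    | succ m ih =>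
      have h1 : a (M + m + 1) ≤ r * a (M + m) + b (M + m + 1) :=
        hrec _ (le_trans (le_max_left _ _) (Nat.le_add_right _ _))
      have h2 : b (M + m + 1) ≤ (1 - r) * δ / 4 := by
        have := hbM (M + m + 1) (by omega)
        exact (abs_le.mp this).2
      have h3 : r * a (M + m) ≤ r * (r ^ m * a M + δ / 4) :=
        mul_le_mul_of_nonneg_left ih hr0
      have : a (M + m + 1) ≤ r ^ (m + 1) * a M + δ / 4 := by
        have hrm : r * (r ^ m * a M) = r ^ (m + 1) * a M := by ring
        nlinarith
      exact this
  have hpow : Tendsto (fun m : ℕ => r ^ m * a M) atTop (nhds 0) := by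
    have := (tendsto_pow_atTop_nhds_zero_of_lt_one hr0 hr1).mul_const (a M)
    rwa [zero_mul] at this
  obtain ⟨M1, hM1⟩ := Metric.tendsto_atTop.mp hpow (δ / 4) (by linarith)
  refine ⟨M + M1, fun n hn => ?_⟩
  have hnM : M ≤ n := by omega
  obtain ⟨m, rfl⟩ : ∃ m, n = M + m := ⟨n - M, by omega⟩
  have hm : M1 ≤ m := by omega
  have h1 := key m
  have h2 := hM1 m hm
  rw [Real.dist_eq, sub_zero, abs_of_nonneg (mul_nonneg (pow_nonneg hr0 m) (ha M))] at h2
  rw [Real.dist_eq, sub_zero, abs_of_nonneg (ha _)]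
  linarith

/-- If `|ρ| < 1`, `s_k = ρ s_{k-1} + x_k` with `s_{-1} = 0`, and for every `ε > 0`,
`x_k / k^{α+ε} → 0` a.s., then for every `ε > 0`, `s_k / k^{α+ε} → 0` a.s. -/
theorem ar1_preserves_convergence_class
    {Ω : Type*} [MeasurableSpace Ω] (μ : Measure Ω) [IsProbabilityMeasure μ]
    (ρ α : ℝ) (hρ : |ρ| < 1)
    (x s : ℕ → Ω → ℝ)
    (hs0 : ∀ ω, s 0 ω = x 0 ω)
    (hsrec : ∀ k ω, s (k + 1) ω = ρ * s k ω + x (k + 1) ω)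
    (hx : ∀ ε > (0 : ℝ), ∀ᵐ ω ∂μ,
      Tendsto (fun k : ℕ => x k ω / (k : ℝ) ^ (α + ε)) atTop (nhds 0)) :
    ∀ ε > (0 : ℝ), ∀ᵐ ω ∂μ,
      Tendsto (fun k : ℕ => s k ω / (k : ℝ) ^ (α + ε)) atTop (nhds 0) := by
  intro ε hε
  filter_upwards [hx ε hε] with ω hω
  set c : ℝ := α + ε with hc
  set r : ℝ := (1 + |ρ|) / 2 with hr
  have hr0 : 0 ≤ r := by positivity
  have hr1 : r < 1 := by rw [hr]; linarith
  have hρr : |ρ| < r := by rw [hr]; linarith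
  -- the ratio (k/(k+1))^c tends to 1
  have hratio : Tendsto (fun k : ℕ => |ρ| * ((k : ℝ) / ((k : ℝ) + 1)) ^ c)
      atTop (nhds (|ρ| * 1)) := by
    have h1 : Tendsto (fun k : ℕ => (k : ℝ) / ((k : ℝ) + 1)) atTop (nhds 1) :=
      tendsto_natCast_div_add_atTop 1
    have h2 : ContinuousAt (fun t : ℝ => t ^ c) 1 :=
      Real.continuousAt_rpow_const 1 c (Or.inl one_ne_zero)
    have := (h2.tendsto.comp h1)
    rw [Real.one_rpow] at this
    exact (tendsto_const_nhds.mul this)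
  have hev : ∀ᶠ k : ℕ in atTop, |ρ| * ((k : ℝ) / ((k : ℝ) + 1)) ^ c < r := by
    rw [mul_one] at hratio
    exact hratio.eventually_lt_const hρr
  obtain ⟨N0, hN0⟩ := eventually_atTop.mp hev
  set N := max N0 1 with hN
  set a : ℕ → ℝ := fun k => |s k ω / (k : ℝ) ^ c| with haDef
  set b : ℕ → ℝ := fun k => |x k ω / (k : ℝ) ^ c| with hbDef
  have hbTendsto : Tendsto b atTop (nhds 0) := by
    have := hω.abs
    simpa using this
  have hrec : ∀ k, N ≤ k → a (k + 1) ≤ r * a k + b (k + 1) := by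
    intro k hk
    have hk1 : 1 ≤ k := le_trans (le_max_right _ _) hk
    have hkpos : (0 : ℝ) < (k : ℝ) := by exact_mod_cast hk1
    have hk1pos : (0 : ℝ) < (k : ℝ) + 1 := by linarith
    have hkc : (0 : ℝ) < (k : ℝ) ^ c := Real.rpow_pos_of_pos hkpos c
    have hk1c : (0 : ℝ) < ((k : ℝ) + 1) ^ c := Real.rpow_pos_of_pos hk1pos c
    have hcast : ((k + 1 : ℕ) : ℝ) = (k : ℝ) + 1 := by push_cast; ring
    have hstep : a (k + 1) = |ρ * s k ω + x (k + 1) ω| / ((k : ℝ) + 1) ^ c := by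
      rw [haDef]
      simp only [hsrec k ω, hcast, abs_div, abs_of_pos hk1c]
    have htri : |ρ * s k ω + x (k + 1) ω| ≤ |ρ| * |s k ω| + |x (k + 1) ω| := by
      calc |ρ * s k ω + x (k + 1) ω| ≤ |ρ * s k ω| + |x (k + 1) ω| := abs_add_le _ _
        _ = |ρ| * |s k ω| + |x (k + 1) ω| := by rw [abs_mul]
    have hb1 : |x (k + 1) ω| / ((k : ℝ) + 1) ^ c = b (k + 1) := by
      rw [hbDef]; simp only [hcast, abs_div, abs_of_pos hk1c]
    have ha1 : |s k ω| / ((k : ℝ) + 1) ^ c = a k * ((k : ℝ) / ((k : ℝ) + 1)) ^ c := by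
      rw [haDef, Real.div_rpow hkpos.le hk1pos.le]
      simp only [abs_div, abs_of_pos hkc]
      field_simp
    have hrk : |ρ| * ((k : ℝ) / ((k : ℝ) + 1)) ^ c ≤ r :=
      (hN0 k (le_trans (le_max_left _ _) hk)).le
    have hanneg : 0 ≤ a k := abs_nonneg _
    calc a (k + 1) = |ρ * s k ω + x (k + 1) ω| / ((k : ℝ) + 1) ^ c := hstep
      _ ≤ (|ρ| * |s k ω| + |x (k + 1) ω|) / ((k : ℝ) + 1) ^ c := by gcongr
      _ = |ρ| * (|s k ω| / ((k : ℝ) + 1) ^ c) + b (k + 1) := by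
          rw [add_div, hb1, mul_div_assoc]
      _ = (|ρ| * ((k : ℝ) / ((k : ℝ) + 1)) ^ c) * a k + b (k + 1) := by
          rw [ha1]; ring
      _ ≤ r * a k + b (k + 1) :=
          add_le_add_left (mul_le_mul_of_nonneg_right hrk hanneg) _
  have haT := aux_contract r hr0 hr1 a b (fun n => abs_nonneg _) hbTendsto N hrec
  rw [tendsto_zero_iff_norm_tendsto_zero]
  rw [haDef] at haT
  simpa only [Real.norm_eq_abs] using haT
end

section
/- Let S_k = A S_{k-1} B + X_k with S_{-1} = 0, where A, B are fixed matrices such that B^T ⊗ A is strictly stable (spectral radius < 1). If X_k ∈ C(α) (i.e., for all ε > 0, ‖X_k‖/k^{α+ε} → 0 a.s.), then S_k ∈ C(α). -/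
open MeasureTheory Filter Matrix
open scoped ENNReal NNReal

theorem aux_scalar (ρ : ℝ) (hρ0 : 0 ≤ ρ) (hρ1 : ρ < 1) (γ : ℝ)
    (u w : ℕ → ℝ) (hu0 : ∀ k, 0 ≤ u k) (hw0 : ∀ k, 0 ≤ w k)
    (hrec : ∀ k, w (k + 1) ≤ ρ * w k + u (k + 1))
    (hu : Tendsto (fun k : ℕ => u k / (k : ℝ) ^ γ) atTop (nhds 0)) :
    Tendsto (fun k : ℕ => w k / (k : ℝ) ^ γ) atTop (nhds 0) := by
  set ρ' : ℝ := (1 + ρ) / 2 with hρ'def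
  have hρρ' : ρ < ρ' := by rw [hρ'def]; linarith
  have hρ'0 : 0 < ρ' := by rw [hρ'def]; linarith
  have hρ'1 : ρ' < 1 := by rw [hρ'def]; linarith
  have hbase : Tendsto (fun k : ℕ => 1 + 1 / (k : ℝ)) atTop (nhds 1) := by
    have h := tendsto_one_div_atTop_nhds_zero_nat.const_add (1 : ℝ)
    simpa using h
  have hratio : Tendsto (fun k : ℕ => (1 + 1 / (k : ℝ)) ^ γ) atTop (nhds 1) := by
    have hc : ContinuousAt (fun x : ℝ => x ^ γ) 1 :=
      Real.continuousAt_rpow_const 1 γ (Or.inl one_ne_zero)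
    have := hc.tendsto.comp hbase
    simpa [Function.comp_def] using this
  have hstepA : ∀ᶠ k : ℕ in atTop, ρ * (k : ℝ) ^ γ ≤ ρ' * ((k : ℝ) + 1) ^ γ := by
    have hlt : ρ / ρ' < 1 := by rw [div_lt_one hρ'0]; exact hρρ'
    filter_upwards [hratio.eventually_const_lt hlt, eventually_ge_atTop 1] with k hk hk1
    have hkpos : (0 : ℝ) < (k : ℝ) := by exact_mod_cast hk1
    have heq : (1 + 1 / (k : ℝ)) ^ γ = ((k : ℝ) + 1) ^ γ / (k : ℝ) ^ γ := by
      rw [← Real.div_rpow (by positivity) (le_of_lt hkpos)]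
      congr 1
      field_simp
    rw [heq] at hk
    have hkγ : (0 : ℝ) < (k : ℝ) ^ γ := Real.rpow_pos_of_pos hkpos γ
    rw [div_lt_div_iff₀ hρ'0 hkγ] at hk
    nlinarith
  rw [Metric.tendsto_nhds]
  intro ε hε
  set c : ℝ := ε * (1 - ρ') / 2 with hcdef
  have hc0 : 0 < c := by rw [hcdef]; nlinarith
  have hucev : ∀ᶠ k : ℕ in atTop, u k ≤ c * (k : ℝ) ^ γ := by
    filter_upwards [(Metric.tendsto_nhds.1 hu) c hc0, eventually_ge_atTop 1] with k hk hk1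
    have hkpos : (0 : ℝ) < (k : ℝ) := by exact_mod_cast hk1
    have hkγ : (0 : ℝ) < (k : ℝ) ^ γ := Real.rpow_pos_of_pos hkpos γ
    rw [Real.dist_eq, sub_zero, abs_of_nonneg (div_nonneg (hu0 k) hkγ.le)] at hk
    rw [div_lt_iff₀ hkγ] at hk
    linarith
  obtain ⟨K₀, hK₀⟩ := (hstepA.and hucev).exists_forall_of_atTop
  set K : ℕ := K₀ + 1 with hKdef
  have hK : ∀ b ≥ K, (ρ * (b : ℝ) ^ γ ≤ ρ' * ((b : ℝ) + 1) ^ γ) ∧ u b ≤ c * (b : ℝ) ^ γ :=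
    fun b hb => hK₀ b (by omega)
  set t : ℕ → ℝ := fun k => w k / (k : ℝ) ^ γ with htdef
  have ht0 : ∀ k, 0 ≤ t k := fun k =>
    div_nonneg (hw0 k) (Real.rpow_nonneg (Nat.cast_nonneg k) γ)
  have hkey : ∀ j : ℕ, t (K + j) ≤ ρ' ^ j * t K + ε / 2 := by
    intro j
    induction j with
    | zero => simp; nlinarith [ht0 K, hε]
    | succ j ih =>
      obtain ⟨hA, _⟩ := hK (K + j) (Nat.le_add_right _ _)
      obtain ⟨_, hB⟩ := hK (K + j + 1) (by omega)
      set k := K + j with hkdef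
      have hk1 : (1 : ℝ) ≤ (k : ℝ) := by
        have : 1 ≤ k := by omega
        exact_mod_cast this
      have hkγ : (0 : ℝ) < ((k : ℝ) + 1) ^ γ := Real.rpow_pos_of_pos (by linarith) γ
      have hkγ' : (0 : ℝ) < (k : ℝ) ^ γ := Real.rpow_pos_of_pos (by linarith) γ
      have hcast : ((k + 1 : ℕ) : ℝ) = (k : ℝ) + 1 := by push_cast; ring
      have h1 : t (k + 1) ≤ (ρ * w k + u (k + 1)) / ((k : ℝ) + 1) ^ γ := by
        rw [htdef]
        simp only [hcast]
        exact div_le_div_of_nonneg_right (hrec k) hkγ.le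
      have h2 : (ρ * w k + u (k + 1)) / ((k : ℝ) + 1) ^ γ
          = ρ * w k / ((k : ℝ) + 1) ^ γ + u (k + 1) / ((k : ℝ) + 1) ^ γ := by ring
      have h3 : ρ * w k / ((k : ℝ) + 1) ^ γ ≤ ρ' * t k := by
        rw [htdef]
        show ρ * w k / ((k : ℝ) + 1) ^ γ ≤ ρ' * (w k / (k : ℝ) ^ γ)
        rw [mul_div_assoc'] at *
        rw [div_le_div_iff₀ hkγ hkγ']
        nlinarith [mul_nonneg (sub_nonneg.2 hA) (hw0 k)]
      have h4 : u (k + 1) / ((k : ℝ) + 1) ^ γ ≤ c := by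
        rw [div_le_iff₀ hkγ]
        have := hB
        rw [hcast] at this
        linarith
      have h5 : ρ' * t k ≤ ρ' * (ρ' ^ j * t K + ε / 2) :=
        mul_le_mul_of_nonneg_left ih hρ'0.le
      have hpow : ρ' ^ (j + 1) = ρ' ^ j * ρ' := pow_succ ρ' j
      have := h1.trans_eq h2
      rw [hcdef] at h4
      show t (k + 1) ≤ ρ' ^ (j + 1) * t K + ε / 2
      have h6 : ρ' * (ρ' ^ j * t K + ε / 2) = ρ' ^ (j + 1) * t K + ρ' * (ε / 2) := by
        rw [hpow]; ring
      have h7 : ρ' * (ε / 2) + ε * (1 - ρ') / 2 = ε / 2 := by ring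
      linarith
  have hgeo : Tendsto (fun j : ℕ => ρ' ^ j * t K) atTop (nhds 0) := by
    have := (tendsto_pow_atTop_nhds_zero_of_lt_one hρ'0.le hρ'1).mul_const (t K)
    simpa using this
  obtain ⟨J, hJ⟩ := ((hgeo.eventually_lt_const (show (0:ℝ) < ε/2 by linarith))).exists_forall_of_atTop
  rw [eventually_atTop]
  refine ⟨K + J, fun k hk => ?_⟩
  have hkk : k = K + (k - K) := by omega
  have hJ' : ρ' ^ (k - K) * t K < ε / 2 := hJ (k - K) (by omega)
  have := hkey (k - K)
  rw [← hkk] at this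
  rw [Real.dist_eq, sub_zero, abs_of_nonneg (ht0 k)]
  calc t k ≤ ρ' ^ (k - K) * t K + ε / 2 := this
    _ < ε := by linarith


section Aux1
variable {ι : Type*} [Fintype ι] [DecidableEq ι] [Nonempty ι]

attribute [local instance] Matrix.linftyOpNormedRing Matrix.linftyOpNormedAlgebra

theorem aux_power_bound (M : Matrix ι ι ℝ)
    (h : ∀ z ∈ spectrum ℂ (M.map Complex.ofReal), ‖z‖ < 1) :
    ∃ C : ℝ, 0 < C ∧ ∃ ρ : ℝ, 0 ≤ ρ ∧ ρ < 1 ∧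
      ∀ (j : ℕ) (r : ι), (∑ c : ι, |(M ^ j) r c|) ≤ C * ρ ^ j := by
  haveI : CompleteSpace (Matrix ι ι ℂ) := FiniteDimensional.complete ℂ _
  set Mc : Matrix ι ι ℂ := M.map Complex.ofReal with hMc
  have hrad : spectralRadius ℂ Mc < (1 : ℝ≥0) := by
    refine spectrum.spectralRadius_lt_of_forall_lt Mc fun z hz => ?_
    have := h z hz
    simpa [← NNReal.coe_lt_coe] using this
  have hgel := spectrum.pow_nnnorm_pow_one_div_tendsto_nhds_spectralRadius Mc
  obtain ⟨t, ht1, ht2⟩ := ENNReal.lt_iff_exists_nnreal_btwn.1 (by simpa using hrad)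
  have htpos : (0 : ℝ≥0∞) < t := lt_of_le_of_lt zero_le ht1
  have ht0 : 0 < t := by exact_mod_cast htpos
  have ht0' : (0 : ℝ) < (t : ℝ) := ht0
  have ht2' : (t : ℝ) < 1 := by exact_mod_cast ht2
  have hev : ∀ᶠ n : ℕ in atTop, (‖Mc ^ n‖₊ : ℝ≥0∞) ^ (1 / (n : ℝ)) < (t : ℝ≥0∞) :=
    hgel.eventually_lt_const ht1
  obtain ⟨N, hN⟩ := hev.exists_forall_of_atTop
  have hpow : ∀ n, N + 1 ≤ n → ‖Mc ^ n‖ ≤ (t : ℝ) ^ n := by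
    intro n hn
    have hn0 : (n : ℝ) ≠ 0 := by
      have : 0 < n := by omega
      positivity
    have h1 : ((‖Mc ^ n‖₊ : ℝ≥0∞) ^ (1 / (n : ℝ))) ^ n < (t : ℝ≥0∞) ^ n :=
      ENNReal.pow_lt_pow_left (by omega) (hN n (by omega))
    have h2 : ((‖Mc ^ n‖₊ : ℝ≥0∞) ^ (1 / (n : ℝ))) ^ n = (‖Mc ^ n‖₊ : ℝ≥0∞) := by
      rw [← ENNReal.rpow_natCast _ n, ← ENNReal.rpow_mul, one_div,
        inv_mul_cancel₀ hn0, ENNReal.rpow_one]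
    rw [h2, ← ENNReal.coe_pow, ENNReal.coe_lt_coe] at h1
    have : ‖Mc ^ n‖₊ ≤ t ^ n := h1.le
    calc ‖Mc ^ n‖ = ((‖Mc ^ n‖₊ : ℝ≥0) : ℝ) := rfl
      _ ≤ ((t ^ n : ℝ≥0) : ℝ) := by exact_mod_cast this
      _ = (t : ℝ) ^ n := by push_cast; ring
  set C : ℝ := 1 + ∑ j ∈ Finset.range (N + 1), ‖Mc ^ j‖ / (t : ℝ) ^ j with hCdef
  have hsum_nonneg : ∀ j ∈ Finset.range (N + 1), (0:ℝ) ≤ ‖Mc ^ j‖ / (t : ℝ) ^ j :=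
    fun j _ => div_nonneg (norm_nonneg _) (by positivity)
  have hC1 : 1 ≤ C := by
    rw [hCdef]
    have := Finset.sum_nonneg hsum_nonneg
    linarith
  have hMb : ∀ j : ℕ, ‖Mc ^ j‖ ≤ C * (t : ℝ) ^ j := by
    intro j
    rcases le_or_gt (N + 1) j with hj | hj
    · calc ‖Mc ^ j‖ ≤ (t : ℝ) ^ j := hpow j hj
        _ ≤ C * (t : ℝ) ^ j := by nlinarith [pow_pos ht0' j]
    · have hmem : j ∈ Finset.range (N + 1) := Finset.mem_range.2 hj
      have hle : ‖Mc ^ j‖ / (t : ℝ) ^ j ≤ C := by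
        rw [hCdef]
        have := Finset.single_le_sum hsum_nonneg hmem
        linarith
      have htj : (0:ℝ) < (t : ℝ) ^ j := by positivity
      calc ‖Mc ^ j‖ = ‖Mc ^ j‖ / (t : ℝ) ^ j * (t : ℝ) ^ j := by field_simp
        _ ≤ C * (t : ℝ) ^ j := mul_le_mul_of_nonneg_right hle htj.le
  refine ⟨C, by linarith, (t : ℝ), ht0'.le, ht2', fun j r => ?_⟩
  have hmap : Mc ^ j = (M ^ j).map Complex.ofReal := by
    have := map_pow (Complex.ofRealHom.mapMatrix (m := ι)) M j
    have h' := by simpa [RingHom.mapMatrix_apply] using this.symm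
    exact h'
  have hrow : (∑ c : ι, ‖(Mc ^ j) r c‖₊) ≤ ‖Mc ^ j‖₊ := by
    rw [Matrix.linfty_opNNNorm_def]
    exact Finset.le_sup (f := fun i => ∑ c : ι, ‖(Mc ^ j) i c‖₊) (Finset.mem_univ r)
  have hrow' : (∑ c : ι, ‖(Mc ^ j) r c‖) ≤ ‖Mc ^ j‖ := by
    have := (NNReal.coe_le_coe).2 hrow
    simpa [NNReal.coe_sum] using this
  have heq : (∑ c : ι, |(M ^ j) r c|) = ∑ c : ι, ‖(Mc ^ j) r c‖ := by
    rw [hmap]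
    simp [Matrix.map_apply, Real.norm_eq_abs]
  rw [heq]
  exact hrow'.trans (hMb j)
end Aux1


attribute [local instance] Matrix.normedAddCommGroup

theorem aux_kron_pow {m n : ℕ} (A : Matrix (Fin m) (Fin m) ℝ) (B : Matrix (Fin n) (Fin n) ℝ)
    (j : ℕ) : (Matrix.kroneckerMap (· * ·) Bᵀ A) ^ j
      = Matrix.kroneckerMap (· * ·) (Bᵀ ^ j) (A ^ j) := by
  induction j with
  | zero => simp [Matrix.one_kronecker_one]
  | succ j ih => rw [pow_succ, ih, pow_succ, pow_succ, ← Matrix.mul_kronecker_mul]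

theorem aux_norm_bound {m n : ℕ} (A : Matrix (Fin m) (Fin m) ℝ) (B : Matrix (Fin n) (Fin n) ℝ)
    (C ρ : ℝ) (hC : 0 < C) (hρ : 0 ≤ ρ)
    (hrow : ∀ (j : ℕ) (r : Fin n × Fin m),
      (∑ c : Fin n × Fin m, |((Matrix.kroneckerMap (· * ·) Bᵀ A) ^ j) r c|) ≤ C * ρ ^ j)
    (j : ℕ) (Y : Matrix (Fin m) (Fin n) ℝ) :
    ‖A ^ j * Y * B ^ j‖ ≤ C * ρ ^ j * ‖Y‖ := by
  rw [Matrix.norm_le_iff (by positivity)]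
  intro i l
  have hentry : (A ^ j * Y * B ^ j) i l
      = ∑ q : Fin n, ∑ p : Fin m, (A ^ j) i p * Y p q * (B ^ j) q l := by
    simp [Matrix.mul_apply, Finset.sum_mul]
  rw [Real.norm_eq_abs, hentry]
  have hterm : ∀ (q : Fin n) (p : Fin m),
      |(A ^ j) i p * Y p q * (B ^ j) q l| ≤ |(Bᵀ ^ j) l q * (A ^ j) i p| * ‖Y‖ := by
    intro q p
    have h1 : (Bᵀ ^ j) l q = (B ^ j) q l := by
      rw [← Matrix.transpose_pow]; rfl
    have h2 : |(A ^ j) i p * Y p q * (B ^ j) q l|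
        = |(Bᵀ ^ j) l q * (A ^ j) i p| * |Y p q| := by
      rw [h1, abs_mul, abs_mul, abs_mul]; ring
    rw [h2]
    have := Matrix.norm_entry_le_entrywise_sup_norm Y (i := p) (j := q)
    rw [Real.norm_eq_abs] at this
    exact mul_le_mul_of_nonneg_left this (abs_nonneg _)
  calc |∑ q : Fin n, ∑ p : Fin m, (A ^ j) i p * Y p q * (B ^ j) q l|
      ≤ ∑ q : Fin n, ∑ p : Fin m, |(A ^ j) i p * Y p q * (B ^ j) q l| := by
        refine (Finset.abs_sum_le_sum_abs _ _).trans ?_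
        exact Finset.sum_le_sum fun q _ => Finset.abs_sum_le_sum_abs _ _
    _ ≤ ∑ q : Fin n, ∑ p : Fin m, |(Bᵀ ^ j) l q * (A ^ j) i p| * ‖Y‖ :=
        Finset.sum_le_sum fun q _ => Finset.sum_le_sum fun p _ => hterm q p
    _ = (∑ c : Fin n × Fin m, |((Matrix.kroneckerMap (· * ·) Bᵀ A) ^ j) (l, i) c|) * ‖Y‖ := by
        rw [aux_kron_pow, Fintype.sum_prod_type, Finset.sum_mul]
        congr 1 with q
        rw [Finset.sum_mul]
        rfl
    _ ≤ C * ρ ^ j * ‖Y‖ :=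
        mul_le_mul_of_nonneg_right (hrow j (l, i)) (norm_nonneg _)

attribute [local instance] Matrix.normedAddCommGroup

/-- If `S_k = A S_{k-1} B + X_k` with `S_{-1} = 0`, `Bᵀ ⊗ A` strictly stable, and
`X_k ∈ C(α)` (i.e. `‖X_k‖/k^{α+ε} → 0` a.s. for all `ε > 0`), then `S_k ∈ C(α)`. -/
theorem matrix_recursion_preserves_convergence_class
    {Ω' : Type*} [MeasurableSpace Ω'] (μ : Measure Ω') [IsProbabilityMeasure μ]
    {m n : ℕ} (α : ℝ)
    (A : Matrix (Fin m) (Fin m) ℝ) (B : Matrix (Fin n) (Fin n) ℝ)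
    (hstable : ∀ z ∈ spectrum ℂ ((Matrix.kroneckerMap (· * ·) Bᵀ A).map Complex.ofReal),
      ‖z‖ < 1)
    (X S : ℕ → Ω' → Matrix (Fin m) (Fin n) ℝ)
    (hS0 : ∀ ω, S 0 ω = X 0 ω)
    (hSrec : ∀ k ω, S (k + 1) ω = A * S k ω * B + X (k + 1) ω)
    (hX : ∀ ε > (0 : ℝ), ∀ᵐ ω ∂μ,
      Tendsto (fun k : ℕ => ‖X k ω‖ / (k : ℝ) ^ (α + ε)) atTop (nhds 0)) :
    ∀ ε > (0 : ℝ), ∀ᵐ ω ∂μ,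
      Tendsto (fun k : ℕ => ‖S k ω‖ / (k : ℝ) ^ (α + ε)) atTop (nhds 0) := by
  -- degenerate cases
  rcases Nat.eq_zero_or_pos m with hm | hm
  · subst hm
    have hz : ∀ M : Matrix (Fin 0) (Fin n) ℝ, M = 0 := fun M => by
      ext i j; exact i.elim0
    intro ε hε
    refine Filter.Eventually.of_forall fun ω => ?_
    have : (fun k : ℕ => ‖S k ω‖ / (k : ℝ) ^ (α + ε)) = fun _ => 0 := by
      funext k; rw [hz (S k ω)]; simp
    rw [this]; exact tendsto_const_nhds
  rcases Nat.eq_zero_or_pos n with hn | hn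
  · subst hn
    have hz : ∀ M : Matrix (Fin m) (Fin 0) ℝ, M = 0 := fun M => by
      ext i j; exact j.elim0
    intro ε hε
    refine Filter.Eventually.of_forall fun ω => ?_
    have : (fun k : ℕ => ‖S k ω‖ / (k : ℝ) ^ (α + ε)) = fun _ => 0 := by
      funext k; rw [hz (S k ω)]; simp
    rw [this]; exact tendsto_const_nhds
  haveI : Nonempty (Fin n × Fin m) := ⟨(⟨0, hn⟩, ⟨0, hm⟩)⟩
  obtain ⟨C, hC, ρ, hρ0, hρ1, hrow⟩ :=
    aux_power_bound (Matrix.kroneckerMap (· * ·) Bᵀ A) hstable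
  have hbound := aux_norm_bound A B C ρ hC hρ0 hrow
  -- closed form
  have hclosed : ∀ (k : ℕ) (ω : Ω'),
      S k ω = ∑ j ∈ Finset.range (k + 1), A ^ (k - j) * X j ω * B ^ (k - j) := by
    intro k
    induction k with
    | zero => intro ω; simp [hS0]
    | succ k ih =>
      intro ω
      rw [hSrec, ih, Finset.sum_range_succ _ (k + 1)]
      simp only [Nat.sub_self, pow_zero, Matrix.one_mul, Matrix.mul_one]
      congr 1
      rw [Matrix.mul_sum, Matrix.sum_mul]
      refine Finset.sum_congr rfl fun j hj => ?_
      have hj' : j ≤ k := Nat.lt_succ_iff.1 (Finset.mem_range.1 hj)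
      have hsub : k + 1 - j = (k - j) + 1 := by omega
      rw [hsub, pow_succ' A, pow_succ B]
      simp only [Matrix.mul_assoc]
  intro ε hε
  filter_upwards [hX ε hε] with ω hXω
  set γ : ℝ := α + ε with hγdef
  set u : ℕ → ℝ := fun k => C * ‖X k ω‖ with hudef
  set w : ℕ → ℝ := fun k => ∑ j ∈ Finset.range (k + 1), ρ ^ (k - j) * u j with hwdef
  have hu0 : ∀ k, 0 ≤ u k := fun k => mul_nonneg hC.le (norm_nonneg _)
  have hw0 : ∀ k, 0 ≤ w k := fun k =>
    Finset.sum_nonneg fun j _ => mul_nonneg (pow_nonneg hρ0 _) (hu0 j)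
  have hwrec : ∀ k, w (k + 1) = ρ * w k + u (k + 1) := by
    intro k
    simp only [hwdef]
    rw [Finset.sum_range_succ _ (k + 1)]
    simp only [Nat.sub_self, pow_zero, one_mul]
    congr 1
    rw [Finset.mul_sum]
    refine Finset.sum_congr rfl fun j hj => ?_
    have hj' : j ≤ k := Nat.lt_succ_iff.1 (Finset.mem_range.1 hj)
    have hsub : k + 1 - j = (k - j) + 1 := by omega
    rw [hsub, pow_succ']
    ring
  have hSle : ∀ k, ‖S k ω‖ ≤ w k := by
    intro k
    rw [hclosed k ω]
    refine (norm_sum_le _ _).trans ?_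
    refine Finset.sum_le_sum fun j _ => ?_
    have := hbound (k - j) (X j ω)
    calc ‖A ^ (k - j) * X j ω * B ^ (k - j)‖ ≤ C * ρ ^ (k - j) * ‖X j ω‖ := this
      _ = ρ ^ (k - j) * u j := by simp only [hudef]; ring
  have hu_tendsto : Tendsto (fun k : ℕ => u k / (k : ℝ) ^ γ) atTop (nhds 0) := by
    have h := hXω.const_mul C
    rw [mul_zero] at h
    have : (fun k : ℕ => u k / (k : ℝ) ^ γ)
        = fun k : ℕ => C * (‖X k ω‖ / (k : ℝ) ^ γ) := by
      funext k; simp only [hudef]; rw [mul_div_assoc]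
    rw [this]
    exact h
  have hw_tendsto := aux_scalar ρ hρ0 hρ1 γ u w hu0 hw0
    (fun k => (hwrec k).le) hu_tendsto
  refine tendsto_of_tendsto_of_tendsto_of_le_of_le tendsto_const_nhds hw_tendsto
    (fun k => div_nonneg (norm_nonneg _) (Real.rpow_nonneg (Nat.cast_nonneg k) γ))
    (fun k => div_le_div_of_nonneg_right (hSle k)
      (Real.rpow_nonneg (Nat.cast_nonneg k) γ))
end
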